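/- arXiv:2206.13825 — 3 statements merged into one kernel-verified Lean document; each statement's English description precedes it below -/
import Mathlib

section
/- Let 𝔤 be a finite-dimensional real Lie algebra carrying a Sasaki structure (φ,ξ,η,g), and suppose the center of 𝔤 is nonzero. Then the center of 𝔤 equals ℝξ. Moreover, the orthogonal complement ξ^⊥ (on which g is nondegenerate since g(ξ,ξ)=1), equipped with the bracket [v,w]ˇ = [v,w] − η([v,w])ξ, is a Lie algebra; the restriction ǧ of g to ξ^⊥, the restriction J of φ to ξ^⊥ (which preserves ξ^⊥), and the restriction ω of Φ to ξ^⊥ form a pseudo-Kähler structure (ǧ,J,ω) on this Lie algebra; and its Ricci tensor řic satisfies řic(v,w) = ric(v,w) + 2g(v,w) for all v,w ∈ ξ^⊥, where ric is the Ricci tensor of (𝔤,g). -/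
open LinearMap Module

noncomputable section

variable {V : Type} [AddCommGroup V] [Module ℝ V] [FiniteDimensional ℝ V]

/-- A Lie bracket on a real vector space, given as a bilinear map. -/
def IsLieBracket (br : V →ₗ[ℝ] V →ₗ[ℝ] V) : Prop :=
  (∀ x y, br x y = - br y x) ∧
    ∀ x y z, br (br x y) z + br (br y z) x + br (br z x) y = 0

/-- Nilpotency of a Lie bracket: iterated adjoint maps of length `n` vanish. -/
def IsNilpotentBracket (br : V →ₗ[ℝ] V →ₗ[ℝ] V) : Prop :=
  ∃ n : ℕ, ∀ l : List V, l.length = n → ∀ x : V,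
    l.foldr (fun v y => br v y) x = 0

/-- The derived series of a bracket. -/
def derivedSeriesB (br : V →ₗ[ℝ] V →ₗ[ℝ] V) : ℕ → Submodule ℝ V
  | 0 => ⊤
  | n + 1 => Submodule.span ℝ
      {x | ∃ a ∈ derivedSeriesB br n, ∃ b ∈ derivedSeriesB br n, x = br a b}

/-- Solvability of a Lie bracket. -/
def IsSolvableBracket (br : V →ₗ[ℝ] V →ₗ[ℝ] V) : Prop :=
  ∃ n, derivedSeriesB br n = ⊥

/-- `D` is a derivation of the bracket `br`. -/
def IsDerivB (br : V →ₗ[ℝ] V →ₗ[ℝ] V) (D : V →ₗ[ℝ] V) : Prop :=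
  ∀ x y, D (br x y) = br (D x) y + br x (D y)

/-- The musical isomorphism `♯` of a nondegenerate bilinear form. -/
def sharp (g : LinearMap.BilinForm ℝ V) (hg : g.Nondegenerate) :
    Module.Dual ℝ V →ₗ[ℝ] V :=
  (LinearMap.BilinForm.toDual g hg).symm.toLinearMap

/-- The adjoint `f*` of an endomorphism with respect to `g` :
`g (f x) y = g x (f* y)` (for symmetric `g`). -/
def adjE (g : LinearMap.BilinForm ℝ V) (hg : g.Nondegenerate)
    (f : V →ₗ[ℝ] V) : V →ₗ[ℝ] V :=
  sharp g hg ∘ₗ ((LinearMap.llcomp ℝ V V ℝ).flip f ∘ₗ g.flip)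

/-- The symmetric part `f^s = (f + f*)/2`. -/
def symPart (g : LinearMap.BilinForm ℝ V) (hg : g.Nondegenerate)
    (f : V →ₗ[ℝ] V) : V →ₗ[ℝ] V := (2:ℝ)⁻¹ • (f + adjE g hg f)

/-- The skew-symmetric part `f^a = (f - f*)/2`. -/
def skewPart (g : LinearMap.BilinForm ℝ V) (hg : g.Nondegenerate)
    (f : V →ₗ[ℝ] V) : V →ₗ[ℝ] V := (2:ℝ)⁻¹ • (f - adjE g hg f)

/-- The endomorphism `A` associated to a bilinear form `β` by `g (A x) y = β x y`. -/
def endoOf (g : LinearMap.BilinForm ℝ V) (hg : g.Nondegenerate)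
    (β : LinearMap.BilinForm ℝ V) : V →ₗ[ℝ] V := sharp g hg ∘ₗ β

/-- The scalar product of two 1-forms: `g(α♯, β♯)`. -/
def inner1 (g : LinearMap.BilinForm ℝ V) (hg : g.Nondegenerate)
    (α β : Module.Dual ℝ V) : ℝ := g (sharp g hg α) (sharp g hg β)

/-- The scalar product of two endomorphisms: `Tr (f ∘ h*)`. -/
def innerEndo (g : LinearMap.BilinForm ℝ V) (hg : g.Nondegenerate)
    (f h : V →ₗ[ℝ] V) : ℝ := trace ℝ V (f ∘ₗ adjE g hg h)

/-- The scalar product of two 2-forms: `(1/2) Tr (A ∘ B*)`. -/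
def inner2 (g : LinearMap.BilinForm ℝ V) (hg : g.Nondegenerate)
    (α β : LinearMap.BilinForm ℝ V) : ℝ :=
  (2:ℝ)⁻¹ * trace ℝ V (endoOf g hg α ∘ₗ adjE g hg (endoOf g hg β))

/-- The 2-form `d(v♭) : (x, y) ↦ - g(v, [x,y])`. -/
def dflat (g : LinearMap.BilinForm ℝ V) (br : V →ₗ[ℝ] V →ₗ[ℝ] V)
    (v : V) : LinearMap.BilinForm ℝ V :=
  - ((LinearMap.llcomp ℝ V V ℝ (g v)) ∘ₗ br)

/-- The Ricci tensor of a metric Lie algebra: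
`2 ric(v,w) = -Tr ad((v⌟dw♭ + w⌟dv♭)♯) + g(dv♭,dw♭) - g(ad v, ad w) - Tr(ad v ∘ ad w)`. -/
def ricci (br : V →ₗ[ℝ] V →ₗ[ℝ] V) (g : LinearMap.BilinForm ℝ V)
    (hg : g.Nondegenerate) (v w : V) : ℝ :=
  (- trace ℝ V (br (sharp g hg (dflat g br w v + dflat g br v w)))
    + inner2 g hg (dflat g br v) (dflat g br w)
    - innerEndo g hg (br v) (br w)
    - trace ℝ V (br v ∘ₗ br w)) / 2

/-- A Sasaki structure `(φ, ξ, η, g)` on a Lie algebra with bracket `br`. -/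
def IsSasaki (br : V →ₗ[ℝ] V →ₗ[ℝ] V) (g : LinearMap.BilinForm ℝ V)
    (φ : V →ₗ[ℝ] V) (ξ : V) (η : Module.Dual ℝ V) : Prop :=
  η ξ = 1 ∧ (∀ x, η (φ x) = 0) ∧ (∀ x, φ (φ x) = - x + η x • ξ) ∧
    g ξ ξ = 1 ∧ (∀ x, η x = g ξ x) ∧
    (∀ x y, g (φ x) (φ y) = g x y - η x * η y) ∧
    (∀ x y, φ (φ (br x y)) + br (φ x) (φ y) - φ (br (φ x) y)
        - φ (br x (φ y)) - η (br x y) • ξ = 0) ∧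
    (∀ x y, - η (br x y) = 2 * g x (φ y))

/-- A pseudo-Kähler structure `(g, J, ω)`, where `ω (x, y) = g (x, J y)`. -/
def IsPseudoKahler (br : V →ₗ[ℝ] V →ₗ[ℝ] V) (g : LinearMap.BilinForm ℝ V)
    (J : V →ₗ[ℝ] V) : Prop :=
  (∀ x, J (J x) = - x) ∧ (∀ x y, g (J x) (J y) = g x y) ∧
    (∀ x y, br (J x) (J y) - J (br (J x) y) - J (br x (J y)) - br x y = 0) ∧
    (∀ x y z, g (br x y) (J z) + g (br y z) (J x) + g (br z x) (J y) = 0)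


section Helpers

lemma sharp_spec' (g : LinearMap.BilinForm ℝ V) (hg : g.Nondegenerate)
    (α : Module.Dual ℝ V) (y : V) : g (sharp g hg α) y = α y := by
  simpa [sharp] using
    LinearMap.BilinForm.apply_toDual_symm_apply (B := g) (hB := hg) (f := α) (v := y)

lemma g_ext' {g : LinearMap.BilinForm ℝ V} (hg : g.Nondegenerate) {a b : V}
    (h : ∀ y, g a y = g b y) : a = b := by
  have := hg.1 (a - b) (fun y => by simp [h y])
  exact sub_eq_zero.mp this

lemma sharp_unique' (g : LinearMap.BilinForm ℝ V) (hg : g.Nondegenerate)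
    {α : Module.Dual ℝ V} {a : V} (h : ∀ y, g a y = α y) : sharp g hg α = a :=
  g_ext' hg (fun y => by rw [sharp_spec', h])

lemma adjE_spec' (g : LinearMap.BilinForm ℝ V) (hg : g.Nondegenerate)
    (f : V →ₗ[ℝ] V) (a x : V) : g (adjE g hg f a) x = g (f x) a := by
  simp [adjE, sharp_spec']

lemma endoOf_spec' (g : LinearMap.BilinForm ℝ V) (hg : g.Nondegenerate)
    (β : LinearMap.BilinForm ℝ V) (x y : V) : g (endoOf g hg β x) y = β x y := by
  simp [endoOf, sharp_spec']

lemma trace_R' (h : ℝ →ₗ[ℝ] ℝ) : trace ℝ ℝ h = h 1 := by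
  have : h = h 1 • LinearMap.id := by ext c; simp [smul_eq_mul, mul_comm]
  rw [this, map_smul, trace_id]; simp

lemma trace_span' (lam : V →ₗ[ℝ] ℝ) (u : V) :
    trace ℝ V (toSpanSingleton ℝ V u ∘ₗ lam) = lam u := by
  rw [trace_comp_comm', trace_R']; simp [toSpanSingleton]

lemma trace_split' {W : Type} [AddCommGroup W] [Module ℝ W] [FiniteDimensional ℝ W]
    (ι : W →ₗ[ℝ] V) (e : V →ₗ[ℝ] W) (η : V →ₗ[ℝ] ℝ) (ξ : V)
    (hdec : ∀ x, ι (e x) + η x • ξ = x)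
    (F : V →ₗ[ℝ] V) :
    trace ℝ V F = trace ℝ W (e ∘ₗ F ∘ₗ ι) + η (F ξ) := by
  have hF : F = (F ∘ₗ ι) ∘ₗ e + toSpanSingleton ℝ V (F ξ) ∘ₗ η := by
    ext x
    calc F x = F (ι (e x) + η x • ξ) := by rw [hdec x]
    _ = F (ι (e x)) + η x • F ξ := by rw [map_add, map_smul]
    _ = _ := by simp [toSpanSingleton]
  conv_lhs => rw [hF]
  rw [map_add, trace_span', trace_comp_comm']

end Helpers

set_option maxHeartbeats 2000000 in
/-- A Sasaki Lie algebra with nonzero center has center `ℝξ`, and the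
quotient/orthogonal complement `ξ^⊥` carries a pseudo-Kähler structure whose Ricci
tensor satisfies `řic(v,w) = ric(v,w) + 2 g(v,w)`. -/
theorem sasaki_kahler_quotient
    {V : Type} [AddCommGroup V] [Module ℝ V] [FiniteDimensional ℝ V]
    (br : V →ₗ[ℝ] V →ₗ[ℝ] V) (hbr : IsLieBracket br)
    (g : LinearMap.BilinForm ℝ V) (hsym : ∀ x y, g x y = g y x)
    (hg : g.Nondegenerate)
    (φ : V →ₗ[ℝ] V) (ξ : V) (η : Module.Dual ℝ V)
    (hS : IsSasaki br g φ ξ η)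
    (hcenter : ∃ z : V, z ≠ 0 ∧ ∀ x, br z x = 0) :
    -- the center of 𝔤 equals ℝ ξ
    (∀ z : V, (∀ x, br z x = 0) ↔ ∃ c : ℝ, z = c • ξ) ∧
    -- φ preserves ξ^⊥ = ker η
    (∀ v : V, η v = 0 → η (φ v) = 0) ∧
    -- the reduced structure on ξ^⊥ = ker η
    (∀ (brU : LinearMap.ker η →ₗ[ℝ] LinearMap.ker η →ₗ[ℝ] LinearMap.ker η),
      (∀ v w : LinearMap.ker η,
          (brU v w : V) = br (v : V) w - η (br (v : V) w) • ξ) →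
      ∀ (gU : LinearMap.BilinForm ℝ (LinearMap.ker η)),
      (∀ v w : LinearMap.ker η, gU v w = g (v : V) w) →
      ∀ (JU : LinearMap.ker η →ₗ[ℝ] LinearMap.ker η),
      (∀ v : LinearMap.ker η, (JU v : V) = φ v) →
      -- it is a Lie algebra
      IsLieBracket brU ∧
      -- g is nondegenerate on ξ^⊥
      gU.Nondegenerate ∧
      -- (ǧ, J, ω) is pseudo-Kähler, where ω v w = gU v (JU w) is the restriction of Φ
      IsPseudoKahler brU gU JU ∧
      -- the Ricci tensors are related by řic = ric + 2 g
      (∀ (hgU : gU.Nondegenerate) (v w : LinearMap.ker η),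
        ricci brU gU hgU v w = ricci br g hg (v : V) (w : V) + 2 * g (v : V) w)) := by
  obtain ⟨h1, h2, h3, h4, h5, h6, h7, h8⟩ := hS
  obtain ⟨hanti, hjac⟩ := hbr
  -- basic derived facts
  have hgxξ : ∀ x, g x ξ = η x := fun x => by rw [hsym, ← h5]
  have hφξ : φ ξ = 0 := by
    have e1 : φ (φ ξ) = 0 := by rw [h3]; simp [h1]
    have e2 : φ (φ (φ ξ)) = - φ ξ + η (φ ξ) • ξ := h3 (φ ξ)
    rw [e1, map_zero] at e2
    rw [h2] at e2
    simpa using e2.symm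
  have hφskew : ∀ x y, g (φ x) y = - g x (φ y) := by
    intro x y
    have e1 := h6 x (φ y)
    rw [h2, mul_zero, sub_zero] at e1
    have e2 : φ (φ y) = - y + η y • ξ := h3 y
    rw [e2, map_add, map_neg, map_smul] at e1
    have e3 : g (φ x) ξ = η (φ x) := hgxξ (φ x)
    rw [h2] at e3
    rw [e3] at e1
    simp at e1
    linarith
  have hηbr : ∀ x y, η (br x y) = -(2 * g x (φ y)) := by
    intro x y; have := h8 x y; linarith
  -- forward center: any central element is a multiple of ξ
  have hcen1 : ∀ z : V, (∀ x, br z x = 0) → z = η z • ξ := by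
    intro z hz
    have hzφ : ∀ x, g z (φ x) = 0 := by
      intro x
      have := hηbr z x
      rw [hz x, map_zero] at this
      linarith
    apply g_ext' hg
    intro y
    have hy : y = (y - η y • ξ) + η y • ξ := by abel
    have hk : η (y - η y • ξ) = 0 := by simp [h1]
    have hw : g z (y - η y • ξ) = 0 := by
      have : (y - η y • ξ) = - φ (φ (y - η y • ξ)) := by
        rw [h3, hk]; simp
      rw [this, map_neg, hzφ]
      simp
    calc g z y = g z ((y - η y • ξ) + η y • ξ) := by rw [← hy]
    _ = g z (y - η y • ξ) + η y * g z ξ := by rw [map_add, map_smul]; simp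
    _ = η y * η z := by rw [hw, hgxξ]; ring
    _ = g (η z • ξ) y := by rw [map_smul]; simp [h5]; ring
  -- ξ is central
  have hξc : ∀ x, br ξ x = 0 := by
    obtain ⟨z, hz0, hzc⟩ := hcenter
    have hz := hcen1 z hzc
    have hηz : η z ≠ 0 := by
      intro hc; rw [hc, zero_smul] at hz; exact hz0 hz
    intro x
    have : br z x = 0 := hzc x
    rw [hz] at this
    simp only [map_smul, LinearMap.smul_apply] at this
    exact (smul_eq_zero.mp this).resolve_left hηz
  have hbrξ : ∀ x, br x ξ = 0 := by
    intro x; rw [hanti, hξc, neg_zero]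
  have hξc0 : br ξ = 0 := by ext x; exact hξc x
  -- the projection e : V → ker η
  have hmem : ∀ x : V, x - η x • ξ ∈ LinearMap.ker η := by
    intro x; simp [LinearMap.mem_ker, h1]
  set e : V →ₗ[ℝ] LinearMap.ker η :=
    LinearMap.codRestrict (LinearMap.ker η) (LinearMap.id - η.smulRight ξ)
      (fun x => hmem x) with he_def
  have he : ∀ x, (e x : V) = x - η x • ξ := by
    intro x; rfl
  have hηu : ∀ u : LinearMap.ker η, η (u : V) = 0 := fun u => u.2
  have heu : ∀ u : LinearMap.ker η, e (u : V) = u := by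
    intro u; apply Subtype.ext; rw [he, hηu]; simp
  have heξ : e ξ = 0 := by
    apply Subtype.ext; rw [he, h1]; simp
  have hdec : ∀ x : V, ((e x : V)) + η x • ξ = x := by
    intro x; rw [he]; abel
  have hguξ : ∀ u : LinearMap.ker η, g (u : V) ξ = 0 := by
    intro u; rw [hgxξ, hηu]
  refine ⟨?_, ?_, ?_⟩
  · -- center = ℝ ξ
    intro z
    constructor
    · intro hz; exact ⟨η z, hcen1 z hz⟩
    · rintro ⟨c, rfl⟩ x
      rw [map_smul]
      simp [hξc x]
  · intro v _; exact h2 v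
  · intro brU hbrUc gU hgUc JU hJUc
    have hbrc : ∀ a b : LinearMap.ker η,
        br (a : V) (b : V) = ((brU a b : V)) + η (br (a : V) (b : V)) • ξ := by
      intro a b; rw [hbrUc]; abel
    have hebr : ∀ a b : LinearMap.ker η, e (br (a : V) (b : V)) = brU a b := by
      intro a b; apply Subtype.ext; rw [he, hbrUc]
    have hbrL : ∀ (a b c : LinearMap.ker η),
        br ((brU a b : V)) (c : V) = br (br (a : V) (b : V)) (c : V) := by
      intro a b c
      rw [hbrUc]
      simp only [map_sub, map_smul, LinearMap.sub_apply, LinearMap.smul_apply, hξc]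
      simp
    have key3 : ∀ (a b c : V), a + b + c = 0 →
        (a - η a • ξ) + (b - η b • ξ) + (c - η c • ξ) = 0 := by
      intro a b c h
      have hη : η a + η b + η c = 0 := by
        have := congrArg η h; simpa using this
      have h2' : (a - η a • ξ) + (b - η b • ξ) + (c - η c • ξ)
          = (a + b + c) - (η a + η b + η c) • ξ := by
        rw [add_smul, add_smul]; abel
      rw [h2', h, hη]; simp
    refine ⟨⟨?_, ?_⟩, ?_, ?_, ?_⟩
    · -- antisymmetry
      intro x y
      apply Subtype.ext
      have : ((-brU y x : LinearMap.ker η) : V) = -((brU y x : LinearMap.ker η) : V) := rfl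
      rw [this, hbrUc, hbrUc, hanti (x : V) (y : V)]
      simp
      abel
    · -- Jacobi
      intro x y z
      apply Subtype.ext
      have hco : ((brU (brU x y) z + brU (brU y z) x + brU (brU z x) y : LinearMap.ker η) : V)
          = ((brU (brU x y) z : LinearMap.ker η) : V) + ((brU (brU y z) x : LinearMap.ker η) : V)
            + ((brU (brU z x) y : LinearMap.ker η) : V) := rfl
      rw [hco]
      simp only [hbrUc, map_sub, map_smul, LinearMap.sub_apply, LinearMap.smul_apply,
        hξc, smul_zero, sub_zero, smul_eq_mul, mul_zero, ZeroMemClass.coe_zero]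
      have J := hjac (x : V) (y : V) (z : V)
      have hs : η ((br ((br (x:V)) (y:V))) (z:V)) • ξ + η ((br ((br (y:V)) (z:V))) (x:V)) • ξ
          + η ((br ((br (z:V)) (x:V))) (y:V)) • ξ = 0 := by
        rw [← add_smul, ← add_smul]
        have := congrArg η J
        simp only [map_add, map_zero] at this
        rw [this, zero_smul]
      linear_combination (norm := module) J - hs
    · -- nondegeneracy
      have hL : gU.SeparatingLeft := by
        intro u hu
        apply Subtype.ext
        show (u : V) = (0 : V)
        apply hg.1
        intro y
        have : g (u : V) y = g (u : V) ((e y : V)) + η y * g (u : V) ξ := by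
          conv_lhs => rw [← hdec y]
          rw [map_add, map_smul]; simp
        rw [this, hguξ, ← hgUc, hu]
        simp
      exact ⟨hL, fun u hu => hL u (fun y => by rw [hgUc, hsym, ← hgUc]; exact hu y)⟩
    · -- pseudo-Kähler
      have hφφu : ∀ u : LinearMap.ker η, φ (φ (u : V)) = -(u : V) := by
        intro u; rw [h3, hηu]; simp
      have hgφ : ∀ a b : V, g a (φ b) = -(η (br a b)) / 2 := by
        intro a b; have := hηbr a b; linarith
      have E3 : ∀ x y : LinearMap.ker η,
          η (br (φ (x : V)) (φ (y : V))) = η (br (x : V) (y : V)) := by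
        intro x y
        have t1 := hηbr (φ (x : V)) (φ (y : V))
        rw [hφφu y] at t1
        have t2 : g (φ (x : V)) (-(y : V)) = - g (φ (x : V)) (y : V) := by simp
        rw [t2, hφskew] at t1
        have t3 := hηbr (x : V) (y : V)
        rw [t1, t3]; ring
      refine ⟨?_, ?_, ?_, ?_⟩
      · intro x
        apply Subtype.ext
        have : ((-x : LinearMap.ker η) : V) = -(x : V) := rfl
        rw [this, hJUc, hJUc, hφφu]
      · intro x y
        rw [hgUc, hgUc, hJUc, hJUc, h6, hηu, hηu]
        ring
      · -- Nijenhuis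
        intro x y
        apply Subtype.ext
        have hco : ((brU (JU x) (JU y) - JU (brU (JU x) y) - JU (brU x (JU y)) - brU x y
            : LinearMap.ker η) : V)
            = ((brU (JU x) (JU y) : LinearMap.ker η) : V)
              - ((JU (brU (JU x) y) : LinearMap.ker η) : V)
              - ((JU (brU x (JU y)) : LinearMap.ker η) : V)
              - ((brU x y : LinearMap.ker η) : V) := rfl
        have E4 : br (φ (x : V)) (φ (y : V)) - φ (br (φ (x : V)) (y : V))
            - φ (br (x : V) (φ (y : V))) - br (x : V) (y : V) = 0 := by
          have t := h7 (x : V) (y : V)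
          rw [h3 (br (x : V) (y : V))] at t
          linear_combination (norm := module) t
        rw [hco]
        simp only [hJUc, hbrUc, map_sub, map_smul, hφξ, smul_zero, sub_zero, ZeroMemClass.coe_zero]
        rw [E3 x y]
        linear_combination (norm := module) E4
      · -- dω = 0
        intro x y z
        have hterm : ∀ a b c : LinearMap.ker η,
            gU (brU a b) (JU c) = -(η (br (br (a : V) (b : V)) (c : V))) / 2 := by
          intro a b c
          rw [hgUc, hJUc, hbrUc]
          simp only [map_sub, map_smul, LinearMap.sub_apply, LinearMap.smul_apply, smul_eq_mul]
          have hZ : g ξ (φ (c : V)) = 0 := by rw [← h5, h2]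
          rw [hZ, hgφ]
          ring
        rw [hterm, hterm, hterm]
        have hs : η (br (br (x : V) (y : V)) (z : V)) + η (br (br (y : V) (z : V)) (x : V))
            + η (br (br (z : V) (x : V)) (y : V)) = 0 := by
          have := congrArg η (hjac (x : V) (y : V) (z : V)); simpa using this
        linarith
    · -- Ricci
      intro hgU v w
      have hgUsym : ∀ a b : LinearMap.ker η, gU a b = gU b a := fun a b => by
        rw [hgUc, hgUc, hsym]
      have hgred : ∀ (a : LinearMap.ker η) (x : V), g (a : V) x = gU a (e x) := by
        intro a x
        conv_lhs => rw [← hdec x]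
        rw [map_add, map_smul, smul_eq_mul, hguξ a, mul_zero, add_zero, ← hgUc]
      have hebr2 : ∀ (a : LinearMap.ker η) (x : V), e (br (a : V) x) = brU a (e x) := by
        intro a x
        calc e (br (a : V) x) = e (br (a : V) (((e x : V)) + η x • ξ)) := by rw [hdec]
        _ = e (br (a : V) ((e x : V)) + η x • br (a : V) ξ) := by rw [map_add, map_smul]
        _ = e (br (a : V) ((e x : V))) := by rw [hbrξ]; simp
        _ = brU a (e x) := hebr a (e x)
      have hebr3 : ∀ x y : V, e (br x y) = brU (e x) (e y) := by
        intro x y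
        calc e (br x y) = e (br (((e x : V)) + η x • ξ) y) := by rw [hdec]
        _ = e (br ((e x : V)) y + η x • br ξ y) := by
            rw [map_add, map_smul]
            simp
        _ = e (br ((e x : V)) y) := by rw [hξc]; simp
        _ = brU (e x) (e y) := hebr2 (e x) y
      have hφφu : ∀ u : LinearMap.ker η, φ (φ (u : V)) = -(u : V) := by
        intro u; rw [h3, hηu]; simp
      have hdfV : ∀ (a x y : V), dflat g br a x y = -(g a (br x y)) := by
        intro a x y; simp [dflat]
      have hdfU : ∀ (a x y : LinearMap.ker η), dflat gU brU a x y = -(gU a (brU x y)) := by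
        intro a x y; simp [dflat]
      -- ============ Term T4 ============
      have hT4 : trace ℝ V (br (v : V) ∘ₗ br (w : V))
          = trace ℝ (LinearMap.ker η) (brU v ∘ₗ brU w) := by
        rw [trace_split' (LinearMap.ker η).subtype e η ξ hdec]
        have h0 : (br (v : V) ∘ₗ br (w : V)) ξ = 0 := by
          simp [LinearMap.comp_apply, hbrξ]
        rw [h0, map_zero, add_zero]
        congr 1
        ext u
        simp only [LinearMap.comp_apply, Submodule.coe_subtype]
        rw [hebr2, hebr3, heu, heu]
      -- ============ Term T3 ============
      have hSu : ∀ u : LinearMap.ker η,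
          adjE g hg (br (w : V)) (u : V) = ((adjE gU hgU (brU w) u : LinearMap.ker η) : V) := by
        intro u
        apply g_ext' hg
        intro y
        calc g (adjE g hg (br (w : V)) (u : V)) y = g (br (w : V) y) (u : V) :=
            adjE_spec' g hg _ _ _
        _ = g (u : V) (br (w : V) y) := hsym _ _
        _ = gU u (e (br (w : V) y)) := hgred u _
        _ = gU u (brU w (e y)) := by rw [hebr2]
        _ = gU (brU w (e y)) u := hgUsym _ _
        _ = gU (adjE gU hgU (brU w) u) (e y) := (adjE_spec' gU hgU (brU w) u (e y)).symm
        _ = g ((adjE gU hgU (brU w) u : LinearMap.ker η) : V) y := (hgred _ y).symm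
      have hSξ : adjE g hg (br (w : V)) ξ = (2:ℝ) • φ (w : V) := by
        apply g_ext' hg
        intro y
        rw [adjE_spec', hgxξ, hηbr, map_smul]
        simp only [LinearMap.smul_apply, smul_eq_mul]
        rw [hφskew]
        ring
      have hT3 : trace ℝ V (br (v : V) ∘ₗ adjE g hg (br (w : V)))
          = trace ℝ (LinearMap.ker η) (brU v ∘ₗ adjE gU hgU (brU w)) + 4 * g (v : V) (w : V) := by
        rw [trace_split' (LinearMap.ker η).subtype e η ξ hdec]
        congr 1
        · congr 1
          ext u
          simp only [LinearMap.comp_apply, Submodule.coe_subtype]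
          rw [hSu u, hebr2, heu]
        · simp only [LinearMap.comp_apply]
          rw [hSξ, map_smul, map_smul]
          have : η (br (v : V) (φ (w : V))) = 2 * g (v : V) (w : V) := by
            rw [hηbr, hφφu]
            simp
          rw [smul_eq_mul, this]
          ring
      -- ============ Term T1 ============
      have hformξ : (dflat g br (w : V) (v : V) + dflat g br (v : V) (w : V)) ξ = 0 := by
        simp only [LinearMap.add_apply]
        rw [hdfV, hdfV, hbrξ, hbrξ]
        simp
      have hformu : ∀ u : LinearMap.ker η,
          (dflat g br (w : V) (v : V) + dflat g br (v : V) (w : V)) (u : V)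
          = (dflat gU brU w v + dflat gU brU v w) u := by
        intro u
        simp only [LinearMap.add_apply]
        rw [hdfV, hdfV, hdfU, hdfU]
        rw [hgred w, hgred v, hebr2, hebr2, heu]
      have hsharp1 : sharp g hg (dflat g br (w : V) (v : V) + dflat g br (v : V) (w : V))
          = ((sharp gU hgU (dflat gU brU w v + dflat gU brU v w) : LinearMap.ker η) : V) := by
        apply sharp_unique'
        intro y
        calc g ((sharp gU hgU (dflat gU brU w v + dflat gU brU v w) : LinearMap.ker η) : V) y
            = gU (sharp gU hgU (dflat gU brU w v + dflat gU brU v w)) (e y) := hgred _ _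
        _ = (dflat gU brU w v + dflat gU brU v w) (e y) := sharp_spec' gU hgU _ _
        _ = (dflat g br (w : V) (v : V) + dflat g br (v : V) (w : V)) ((e y : V)) :=
            (hformu (e y)).symm
        _ = (dflat g br (w : V) (v : V) + dflat g br (v : V) (w : V)) y := by
            conv_rhs => rw [← hdec y]
            rw [map_add, map_smul, hformξ]
            simp
      have hT1 : trace ℝ V (br (sharp g hg (dflat g br (w : V) (v : V) + dflat g br (v : V) (w : V))))
          = trace ℝ (LinearMap.ker η)
              (brU (sharp gU hgU (dflat gU brU w v + dflat gU brU v w))) := by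
        rw [hsharp1, trace_split' (LinearMap.ker η).subtype e η ξ hdec]
        rw [hbrξ]
        simp only [map_zero, add_zero]
        congr 1
        ext u
        simp only [LinearMap.comp_apply, Submodule.coe_subtype]
        rw [hebr2, heu]
      -- ============ Term T2 ============
      have hAx : ∀ (a : LinearMap.ker η) (x : V),
          endoOf g hg (dflat g br (a : V)) x
          = ((endoOf gU hgU (dflat gU brU a) (e x) : LinearMap.ker η) : V) := by
        intro a x
        apply g_ext' hg
        intro y
        calc g (endoOf g hg (dflat g br (a : V)) x) y = dflat g br (a : V) x y :=
            endoOf_spec' g hg _ _ _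
        _ = -(g (a : V) (br x y)) := hdfV _ _ _
        _ = -(gU a (e (br x y))) := by rw [hgred]
        _ = -(gU a (brU (e x) (e y))) := by rw [hebr3]
        _ = dflat gU brU a (e x) (e y) := (hdfU _ _ _).symm
        _ = gU (endoOf gU hgU (dflat gU brU a) (e x)) (e y) := (endoOf_spec' gU hgU _ _ _).symm
        _ = g ((endoOf gU hgU (dflat gU brU a) (e x) : LinearMap.ker η) : V) y :=
            (hgred _ _).symm
      have hBst : ∀ x : V,
          adjE g hg (endoOf g hg (dflat g br (w : V))) x
          = ((adjE gU hgU (endoOf gU hgU (dflat gU brU w)) (e x) : LinearMap.ker η) : V) := by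
        intro x
        apply g_ext' hg
        intro y
        calc g (adjE g hg (endoOf g hg (dflat g br (w : V))) x) y
            = g (endoOf g hg (dflat g br (w : V)) y) x := adjE_spec' g hg _ _ _
        _ = g ((endoOf gU hgU (dflat gU brU w) (e y) : LinearMap.ker η) : V) x := by rw [hAx w y]
        _ = gU (endoOf gU hgU (dflat gU brU w) (e y)) (e x) := hgred _ _
        _ = gU (endoOf gU hgU (dflat gU brU w) (e y)) (e x) := rfl
        _ = gU (adjE gU hgU (endoOf gU hgU (dflat gU brU w)) (e x)) (e y) := by
            rw [adjE_spec' gU hgU]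
        _ = g ((adjE gU hgU (endoOf gU hgU (dflat gU brU w)) (e x) : LinearMap.ker η) : V) y :=
            (hgred _ _).symm
      have hT2 : trace ℝ V (endoOf g hg (dflat g br (v : V))
            ∘ₗ adjE g hg (endoOf g hg (dflat g br (w : V))))
          = trace ℝ (LinearMap.ker η) (endoOf gU hgU (dflat gU brU v)
            ∘ₗ adjE gU hgU (endoOf gU hgU (dflat gU brU w))) := by
        rw [trace_split' (LinearMap.ker η).subtype e η ξ hdec]
        have h0 : (endoOf g hg (dflat g br (v : V))
            ∘ₗ adjE g hg (endoOf g hg (dflat g br (w : V)))) ξ = 0 := by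
          simp only [LinearMap.comp_apply]
          rw [hBst ξ, heξ, map_zero]
          simp only [ZeroMemClass.coe_zero, map_zero]
        rw [h0, map_zero, add_zero]
        congr 1
        ext u
        simp only [LinearMap.comp_apply, Submodule.coe_subtype]
        rw [hBst, heu, hAx, heu, heu]
      -- ============ assembly ============
      unfold ricci innerEndo inner2
      rw [hT1, hT2, hT3, hT4]
      ring
end
end

section
/- Let (ǧ, ǧg, J, ω) be a pseudo-Kähler nilpotent Lie algebra, let Ď be a derivation of ǧ with Ď∘J = J∘Ď, let τ = ±1, and let h ∈ ℝ be a constant such that [Ď^s,Ď^a] = hĎ^s − 2(Ď^s)². Let g̃ = ǧ ⊕ ℝb ⊕ ℝξ ⊕ ℝe₀ with bracket given by [v,w] = [v,w]_ǧ − τ(Ďω)(v,w)b − 2ω(v,w)ξ for v,w ∈ ǧ (where (Ďω)(x,y) = −ω(Ďx,y) − ω(x,Ďy)), [e₀,v] = Ďv for v ∈ ǧ, [e₀,b] = hb − 2τξ, [e₀,ξ] = 0, and b, ξ commuting with ǧ and with each other. Endow g̃ with the symmetric bilinear form g̃ equal to ǧg on ǧ, with g̃(b,b) = τ, g̃(ξ,ξ)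 = 1, g̃(e₀,e₀) = τ, and ǧ, b, ξ, e₀ mutually orthogonal; set η = g̃(ξ,·) and define φ by φ(v) = Jv for v ∈ ǧ, φ(b) = e₀, φ(ξ) = 0, φ(e₀) = −b. Then the bracket satisfies the Jacobi identity (so g̃ is a Lie algebra), (φ,ξ,η,g̃) is a Sasaki structure on g̃, the subspace 𝔤 = ǧ ⊕ ℝb ⊕ ℝξ is a nilpotent ideal orthogonal to e₀, and φ(e₀) lies in the center of 𝔤 (so the decomposition g̃ = 𝔤 ⋊ ℝe₀ is 𝔷-standard). -/
open LinearMap Module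

noncomputable section

variable {V : Type} [AddCommGroup V] [Module ℝ V] [FiniteDimensional ℝ V]

/-- the construction of a `𝔷`-standard Sasaki Lie algebra
`g̃ = (ǧ ⊕ ℝb ⊕ ℝξ) ⋊ ℝe₀` from a pseudo-Kähler nilpotent Lie algebra with a
derivation `Ď` commuting with `J` and satisfying
`[Ď^s, Ď^a] = h Ď^s - 2 (Ď^s)²`. -/
theorem z_standard_sasaki_construction
    {V : Type} [AddCommGroup V] [Module ℝ V] [FiniteDimensional ℝ V]
    (br : V →ₗ[ℝ] V →ₗ[ℝ] V) (hbr : IsLieBracket br)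
    (hnil : IsNilpotentBracket br)
    (g : LinearMap.BilinForm ℝ V) (hsym : ∀ x y, g x y = g y x)
    (hg : g.Nondegenerate)
    (J : V →ₗ[ℝ] V) (hpk : IsPseudoKahler br g J)
    (D : V →ₗ[ℝ] V) (hD : IsDerivB br D) (hDJ : D ∘ₗ J = J ∘ₗ D)
    (τ : ℝ) (hτ : τ = 1 ∨ τ = -1)
    (h : ℝ)
    (hcomm : symPart g hg D ∘ₗ skewPart g hg D - skewPart g hg D ∘ₗ symPart g hg D
      = h • symPart g hg D - (2:ℝ) • (symPart g hg D ∘ₗ symPart g hg D))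
    -- g̃ = (ǧ ⊕ ℝb ⊕ ℝξ) ⋊ ℝe₀; coordinates ((v, b-comp, ξ-comp), e₀-comp);
    -- [v,w] = [v,w]_ǧ - τ(Ďω)(v,w) b - 2ω(v,w) ξ, [e₀,v] = Ďv, [e₀,b] = hb - 2τξ
    (brW : ((V × ℝ × ℝ) × ℝ) →ₗ[ℝ] ((V × ℝ × ℝ) × ℝ) →ₗ[ℝ] ((V × ℝ × ℝ) × ℝ))
    (hbrW : ∀ p q : (V × ℝ × ℝ) × ℝ,
      brW p q = ((br p.1.1 q.1.1 + p.2 • D q.1.1 - q.2 • D p.1.1,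
        - τ * (- g (D p.1.1) (J q.1.1) - g p.1.1 (J (D q.1.1)))
          + p.2 * (h * q.1.2.1) - q.2 * (h * p.1.2.1),
        - 2 * g p.1.1 (J q.1.1)
          + p.2 * (- 2 * τ * q.1.2.1) - q.2 * (- 2 * τ * p.1.2.1)), 0))
    (gW : LinearMap.BilinForm ℝ ((V × ℝ × ℝ) × ℝ))
    (hgW : ∀ p q : (V × ℝ × ℝ) × ℝ,
      gW p q = g p.1.1 q.1.1 + τ * p.1.2.1 * q.1.2.1 + p.1.2.2 * q.1.2.2
        + τ * p.2 * q.2)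
    -- φ(v) = Jv, φ(b) = e₀, φ(ξ) = 0, φ(e₀) = -b
    (φ : ((V × ℝ × ℝ) × ℝ) →ₗ[ℝ] ((V × ℝ × ℝ) × ℝ))
    (hφ : ∀ p : (V × ℝ × ℝ) × ℝ, φ p = ((J p.1.1, - p.2, 0), p.1.2.1)) :
    -- the bracket satisfies the Jacobi identity
    IsLieBracket brW ∧
    -- g̃ is nondegenerate
    gW.Nondegenerate ∧
    -- (φ, ξ, η, g̃) is a Sasaki structure, with ξ = ((0,0,1),0), η = g̃(ξ,·)
    IsSasaki brW gW φ (((0:V), (0:ℝ), (1:ℝ)), (0:ℝ))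
      (gW (((0:V), (0:ℝ), (1:ℝ)), (0:ℝ))) ∧
    -- the bracket takes values in 𝔤 = ǧ ⊕ ℝb ⊕ ℝξ = {p | p.2 = 0}, so 𝔤 is an ideal
    (∀ p q : (V × ℝ × ℝ) × ℝ, (brW p q).2 = 0) ∧
    -- 𝔤, i.e. the central extension of ǧ by b and ξ, is nilpotent
    (∀ brG : (V × ℝ × ℝ) →ₗ[ℝ] (V × ℝ × ℝ) →ₗ[ℝ] (V × ℝ × ℝ),
      (∀ u v : V × ℝ × ℝ,
        brG u v = (br u.1 v.1,
          - τ * (- g (D u.1) (J v.1) - g u.1 (J (D v.1))),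
          - 2 * g u.1 (J v.1))) →
      IsNilpotentBracket brG) ∧
    -- 𝔤 is orthogonal to e₀
    (∀ p : (V × ℝ × ℝ) × ℝ, p.2 = 0 → gW p (((0:V), (0:ℝ), (0:ℝ)), (1:ℝ)) = 0) ∧
    -- φ(e₀) = -b lies in the center of 𝔤
    (∀ q : (V × ℝ × ℝ) × ℝ, q.2 = 0 →
      brW (((0:V), (-1:ℝ), (0:ℝ)), (0:ℝ)) q = 0) := by
  
  obtain ⟨hJ2, hJg, hNJ, hdw⟩ := hpk
  obtain ⟨hanti, hjac⟩ := hbr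
  have hτ2 : τ * τ = 1 := by rcases hτ with rfl | rfl <;> norm_num
  have hτ0 : τ ≠ 0 := by rcases hτ with rfl | rfl <;> norm_num
  have hDJ' : ∀ v, D (J v) = J (D v) := fun v => LinearMap.congr_fun hDJ v
  have hJanti : ∀ x y, g (J x) y = - (g x (J y)) := by
    intro x y
    have h1 := hJg x (J y)
    rw [hJ2] at h1
    simp only [map_neg] at h1
    linarith
  have hgJ : ∀ x y, g x (J y) = - (g y (J x)) := by
    intro x y
    rw [hsym, hJanti]
  have hadj : ∀ x y, g (adjE g hg D x) y = g (D y) x := by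
    intro x y; simp [adjE, sharp]
  have key : ∀ v w, g (D (D v)) (J w) + 2 * g (D v) (J (D w)) + g v (J (D (D w)))
      = h * (g (D v) (J w) + g v (J (D w))) := by
    intro v w
    have hc : (symPart g hg D ∘ₗ skewPart g hg D - skewPart g hg D ∘ₗ symPart g hg D) v
        = (h • symPart g hg D - (2:ℝ) • (symPart g hg D ∘ₗ symPart g hg D)) v := by
      rw [hcomm]
    set A := adjE g hg D with hA
    have hc2 := congrArg (fun x => g x (J w)) hc
    simp only [symPart, skewPart, ← hA, LinearMap.sub_apply, LinearMap.comp_apply,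
      LinearMap.smul_apply, LinearMap.add_apply, map_add, map_sub, map_smul,
      smul_eq_mul] at hc2
    have f3 : g (A (D v)) (J w) = g (D v) (J (D w)) := by
      rw [hadj, hDJ', hsym]
    have f4 : g (A (A v)) (J w) = g v (J (D (D w))) := by
      rw [hadj, hDJ', hsym, hadj, hDJ', hsym]
    have f6 : g (A v) (J w) = g v (J (D w)) := by
      rw [hadj, hDJ', hsym]
    rw [f3, f4, f6] at hc2
    linear_combination (2:ℝ) * hc2
  
  have hDbr : ∀ x y z, g (D (br x y)) (J z)
      = g (br (D x) y) (J z) + g (br x (D y)) (J z) := by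
    intro x y z
    rw [hD x y]
    simp
  -- Antisymmetry of brW
  have hWanti : ∀ p q, brW p q = - brW q p := by
    intro p q
    obtain ⟨⟨v, a, c⟩, s⟩ := p
    obtain ⟨⟨w, b, d⟩, t⟩ := q
    rw [hbrW, hbrW]
    simp only [Prod.neg_mk, neg_zero, Prod.mk.injEq]
    refine ⟨⟨?_, ?_, ?_⟩, trivial⟩
    · linear_combination (norm := module) hanti v w
    · linear_combination (norm := ring_nf) τ * hgJ (D v) w + τ * hgJ (D w) v
    · linear_combination (norm := ring_nf) (-2 : ℝ) * hgJ v w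
  -- Jacobi identity of brW
  have hWjac : ∀ p q r, brW (brW p q) r + brW (brW q r) p + brW (brW r p) q = 0 := by
    intro p q r
    obtain ⟨⟨v, a, c⟩, s⟩ := p
    obtain ⟨⟨w, b, d⟩, t⟩ := q
    obtain ⟨⟨u, e, f⟩, m⟩ := r
    simp only [hbrW, map_add, map_sub, map_smul, zero_smul, add_zero, zero_mul,
      mul_zero, sub_zero, zero_sub, smul_sub, smul_add, Prod.mk_add_mk,
      Prod.mk_eq_zero, Prod.mk.injEq, LinearMap.add_apply, LinearMap.sub_apply,
      LinearMap.smul_apply, LinearMap.neg_apply, smul_eq_mul]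
    refine ⟨⟨?_, ?_, ?_⟩, trivial⟩
    · linear_combination (norm := module) hjac v w u - m • hD v w - s • hD w u
        - t • hD u v - m • hanti (D w) v - s • hanti (D u) w - t • hanti (D v) u
    · linear_combination (norm := ring_nf)
        τ * hDbr v w u + τ * hDbr w u v + τ * hDbr u v w
        + τ * hdw (D v) w u + τ * hdw v (D w) u + τ * hdw v w (D u)
        + (τ*m) * key v w + (τ*s) * key w u + (τ*t) * key u v
        - (τ*m) * hgJ (D (D w)) v - (τ*m) * hgJ (D w) (D v)
        - (τ*s) * hgJ (D (D u)) w - (τ*s) * hgJ (D u) (D w)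
        - (τ*t) * hgJ (D (D v)) u - (τ*t) * hgJ (D v) (D u)
    · linear_combination (norm := ring_nf)
        (-2 : ℝ) * hdw v w u + (2*m) * hgJ v (D w) + (2*s) * hgJ w (D u)
        + (2*t) * hgJ u (D v)
        + (2*m*(g (D v) (J w) + g v (J (D w))) + 2*s*(g (D w) (J u) + g w (J (D u)))
           + 2*t*(g (D u) (J v) + g u (J (D v)))) * hτ2
  
  -- Nondegeneracy of gW
  have hnd : gW.Nondegenerate := by
    apply LinearMap.BilinForm.Nondegenerate.ofSeparatingLeft
    intro p hp
    obtain ⟨⟨v, a, c⟩, s⟩ := p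
    have h1 : ∀ x : V, g v x = 0 := by
      intro x
      have := hp ((x, 0, 0), 0)
      rw [hgW] at this
      simpa using this
    have h2 := hp ((0, 1, 0), 0)
    rw [hgW] at h2
    simp only [map_zero, LinearMap.zero_apply, mul_zero, mul_one, zero_add, add_zero, zero_mul] at h2
    have h3 := hp ((0, 0, 1), 0)
    rw [hgW] at h3
    simp only [map_zero, LinearMap.zero_apply, mul_zero, mul_one, zero_add, add_zero, zero_mul] at h3
    have h4 := hp ((0, 0, 0), 1)
    rw [hgW] at h4
    simp only [map_zero, LinearMap.zero_apply, mul_zero, mul_one, zero_add, add_zero, zero_mul] at h4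
    have hv : v = 0 := hg.1 v h1
    have ha : a = 0 := by linear_combination (norm := ring_nf) τ * h2 - a * hτ2
    have hs : s = 0 := by linear_combination (norm := ring_nf) τ * h4 - s * hτ2
    simp [hv, ha, h3, hs, Prod.ext_iff]
  -- the η function
  have hη : ∀ q : (V × ℝ × ℝ) × ℝ,
      gW (((0:V), (0:ℝ), (1:ℝ)), (0:ℝ)) q = q.1.2.2 := by
    intro q
    rw [hgW]
    simp
  -- Sasaki structure
  have hsas : IsSasaki brW gW φ (((0:V), (0:ℝ), (1:ℝ)), (0:ℝ))
      (gW (((0:V), (0:ℝ), (1:ℝ)), (0:ℝ))) := by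
    refine ⟨?_, ?_, ?_, ?_, fun x => rfl, ?_, ?_, ?_⟩
    · simp [hη]
    · intro x
      rw [hη, hφ]
    · intro x
      obtain ⟨⟨v, a, c⟩, s⟩ := x
      rw [hφ, hφ, hη]
      simp [hJ2, Prod.ext_iff]
    · simp [hη]
    · intro x y
      obtain ⟨⟨v, a, c⟩, s⟩ := x
      obtain ⟨⟨w, b, d⟩, t⟩ := y
      rw [hφ, hφ, hgW, hgW, hη, hη]
      simp only
      linear_combination (norm := ring_nf) hJg v w
    · intro x y
      obtain ⟨⟨v, a, c⟩, s⟩ := x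
      obtain ⟨⟨w, b, d⟩, t⟩ := y
      simp only [hbrW, hφ, hη, hDJ', hJ2, map_add, map_sub, map_smul, map_neg,
        zero_smul, add_zero, zero_mul, mul_zero, sub_zero, zero_sub, smul_sub,
        smul_add, neg_neg, neg_zero, Prod.mk_add_mk, Prod.mk_sub_mk, Prod.neg_mk,
        Prod.smul_mk, Prod.mk_eq_zero, Prod.mk.injEq, LinearMap.add_apply,
        LinearMap.sub_apply, LinearMap.smul_apply, LinearMap.neg_apply,
        smul_eq_mul, smul_zero, mul_one]
      refine ⟨⟨?_, ?_, ?_⟩, ?_⟩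
      · linear_combination (norm := module) hNJ v w
      · linear_combination (norm := ring_nf) (-τ) * hJanti (D v) w + (-τ) * hJanti v (D w)
      · linear_combination (norm := ring_nf) 2 * hJanti v w
      · linear_combination (norm := ring_nf) (-τ) * hJg (D v) w + (-τ) * hJg v (D w)
    · intro x y
      obtain ⟨⟨v, a, c⟩, s⟩ := x
      obtain ⟨⟨w, b, d⟩, t⟩ := y
      rw [hη, hbrW, hφ, hgW]
      simp only
      ring
  -- bracket takes values in 𝔤
  have hideal : ∀ p q : (V × ℝ × ℝ) × ℝ, (brW p q).2 = 0 := by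
    intro p q
    rw [hbrW]
  -- nilpotency of the central extension
  have hnilp : ∀ brG : (V × ℝ × ℝ) →ₗ[ℝ] (V × ℝ × ℝ) →ₗ[ℝ] (V × ℝ × ℝ),
      (∀ u v : V × ℝ × ℝ,
        brG u v = (br u.1 v.1,
          - τ * (- g (D u.1) (J v.1) - g u.1 (J (D v.1))),
          - 2 * g u.1 (J v.1))) →
      IsNilpotentBracket brG := by
    intro brG hbrG
    obtain ⟨n, hn⟩ := hnil
    refine ⟨n + 1, ?_⟩
    have hfold : ∀ (l : List (V × ℝ × ℝ)) (x : V × ℝ × ℝ),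
        (l.foldr (fun v y => brG v y) x).1
          = (l.map Prod.fst).foldr (fun v y => br v y) x.1 := by
      intro l
      induction l with
      | nil => intro x; rfl
      | cons aa tl ih =>
        intro x
        rw [List.foldr_cons, List.map_cons, List.foldr_cons, hbrG]
        exact congrArg (br aa.1) (ih x)
    intro l hl x
    obtain ⟨aa, tl, rfl⟩ : ∃ aa tl, l = aa :: tl := by
      cases l with
      | nil => simp at hl
      | cons aa tl => exact ⟨aa, tl, rfl⟩
    have hlen : tl.length = n := by simpa using hl
    have h1 : (tl.foldr (fun v y => brG v y) x).1 = 0 := by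
      rw [hfold]
      exact hn (tl.map Prod.fst) (by simp [hlen]) x.1
    rw [List.foldr_cons, hbrG, h1]
    simp [Prod.ext_iff]
  -- orthogonality to e₀
  have horth : ∀ p : (V × ℝ × ℝ) × ℝ, p.2 = 0 →
      gW p (((0:V), (0:ℝ), (0:ℝ)), (1:ℝ)) = 0 := by
    intro p hp
    rw [hgW, hp]
    simp
  -- φ(e₀) = -b is central in 𝔤
  have hcent : ∀ q : (V × ℝ × ℝ) × ℝ, q.2 = 0 →
      brW (((0:V), (-1:ℝ), (0:ℝ)), (0:ℝ)) q = 0 := by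
    intro q hq
    rw [hbrW, hq]
    simp [Prod.ext_iff]
  exact ⟨⟨hWanti, hWjac⟩, hnd, hsas, hideal, hnilp, horth, hcent⟩
end
end

section
/- Let 𝔥₁₁ be the 6-dimensional nilpotent real Lie algebra with basis e₁,…,e₆ and nonzero brackets [e₁,e₂] = e₄, [e₁,e₃] = e₅, [e₁,e₄] = e₆, [e₂,e₃] = −e₆ (and their antisymmetric counterparts). Fix a ∈ ℝ, a ≠ 0, and define the endomorphism J of 𝔥₁₁ by J e₁ = (1/a)e₂, J e₂ = −a e₁, J e₃ = (3/(2a))e₄ + (3/a)e₅, J e₄ = −(2a/3)e₃ − (1/a)e₆, J e₅ = (1/(2a))e₆, J e₆ = −2a e₅ (so J² = −id); let ω = e^{16} + e^{24} − (1/2)e^{25} + (1/2)e^{34}, where {eⁱ} is the dual basis and e^{ij} = eⁱ∧eʲ, and let g be the bilinear form g(x,y) = −ω(x,Jy). Then g is symmetric and nondegenerate, and there exists no derivation D of 𝔥₁₁ satisfying D∘J = J∘D and D + D* = 2·id, where D* denotes the adjoint of D with respect to g. -/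
open LinearMap Module

noncomputable section

variable {V : Type} [AddCommGroup V] [Module ℝ V] [FiniteDimensional ℝ V]

lemma expand6 (x : Fin 6 → ℝ) : x = x 0 • (Pi.single 0 1 : Fin 6 → ℝ) + x 1 • (Pi.single 1 1 : Fin 6 → ℝ)
    + x 2 • (Pi.single 2 1 : Fin 6 → ℝ) + x 3 • (Pi.single 3 1 : Fin 6 → ℝ)
    + x 4 • (Pi.single 4 1 : Fin 6 → ℝ) + x 5 • (Pi.single 5 1 : Fin 6 → ℝ) := by
  funext j; fin_cases j <;> simp [Pi.single_apply]

set_option maxHeartbeats 3200000 in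
/-- the Lie algebra `𝔥₁₁ = (0, 0, 0, e¹², e¹³, e¹⁴ - e²³)` with the
pseudo-Kähler structure `(J, ω₂)` of Smolentsev admits no derivation `D` with
`D∘J = J∘D` and `D + D* = 2·id`.  Here `e i = Pi.single i 1` for `i : Fin 6`
represents `e_{i+1}`. -/
theorem h11_does_not_extend
    (a : ℝ) (ha : a ≠ 0)
    (br : (Fin 6 → ℝ) →ₗ[ℝ] (Fin 6 → ℝ) →ₗ[ℝ] (Fin 6 → ℝ))
    (hbr : IsLieBracket br)
    -- nonzero brackets: [e₁,e₂] = e₄, [e₁,e₃] = e₅, [e₁,e₄] = e₆, [e₂,e₃] = -e₆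
    (h01 : br (Pi.single 0 1) (Pi.single 1 1) = Pi.single 3 1)
    (h02 : br (Pi.single 0 1) (Pi.single 2 1) = Pi.single 4 1)
    (h03 : br (Pi.single 0 1) (Pi.single 3 1) = Pi.single 5 1)
    (h12 : br (Pi.single 1 1) (Pi.single 2 1) = - Pi.single 5 1)
    -- all other brackets of basis elements vanish
    (h04 : br (Pi.single 0 1) (Pi.single 4 1) = 0)
    (h05 : br (Pi.single 0 1) (Pi.single 5 1) = 0)
    (h13 : br (Pi.single 1 1) (Pi.single 3 1) = 0)
    (h14 : br (Pi.single 1 1) (Pi.single 4 1) = 0)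
    (h15 : br (Pi.single 1 1) (Pi.single 5 1) = 0)
    (h23 : br (Pi.single 2 1) (Pi.single 3 1) = 0)
    (h24 : br (Pi.single 2 1) (Pi.single 4 1) = 0)
    (h25 : br (Pi.single 2 1) (Pi.single 5 1) = 0)
    (h34 : br (Pi.single 3 1) (Pi.single 4 1) = 0)
    (h35 : br (Pi.single 3 1) (Pi.single 5 1) = 0)
    (h45 : br (Pi.single 4 1) (Pi.single 5 1) = 0)
    -- the complex structure J
    (J : (Fin 6 → ℝ) →ₗ[ℝ] (Fin 6 → ℝ))
    (hJ0 : J (Pi.single 0 1) = a⁻¹ • (Pi.single 1 1 : Fin 6 → ℝ))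
    (hJ1 : J (Pi.single 1 1) = - a • (Pi.single 0 1 : Fin 6 → ℝ))
    (hJ2 : J (Pi.single 2 1) = (3 / (2 * a)) • (Pi.single 3 1 : Fin 6 → ℝ)
        + (3 / a) • (Pi.single 4 1 : Fin 6 → ℝ))
    (hJ3 : J (Pi.single 3 1) = - (2 * a / 3) • (Pi.single 2 1 : Fin 6 → ℝ)
        - a⁻¹ • (Pi.single 5 1 : Fin 6 → ℝ))
    (hJ4 : J (Pi.single 4 1) = (1 / (2 * a)) • (Pi.single 5 1 : Fin 6 → ℝ))
    (hJ5 : J (Pi.single 5 1) = - (2 * a) • (Pi.single 4 1 : Fin 6 → ℝ))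
    -- the symplectic form ω = e^{16} + e^{24} - (1/2) e^{25} + (1/2) e^{34}
    (ω : LinearMap.BilinForm ℝ (Fin 6 → ℝ))
    (hωalt : ∀ x y, ω x y = - ω y x)
    (hω05 : ω (Pi.single 0 1) (Pi.single 5 1) = 1)
    (hω13 : ω (Pi.single 1 1) (Pi.single 3 1) = 1)
    (hω14 : ω (Pi.single 1 1) (Pi.single 4 1) = - (1/2))
    (hω23 : ω (Pi.single 2 1) (Pi.single 3 1) = 1/2)
    (hω01 : ω (Pi.single 0 1) (Pi.single 1 1) = 0)
    (hω02 : ω (Pi.single 0 1) (Pi.single 2 1) = 0)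
    (hω03 : ω (Pi.single 0 1) (Pi.single 3 1) = 0)
    (hω04 : ω (Pi.single 0 1) (Pi.single 4 1) = 0)
    (hω12 : ω (Pi.single 1 1) (Pi.single 2 1) = 0)
    (hω15 : ω (Pi.single 1 1) (Pi.single 5 1) = 0)
    (hω24 : ω (Pi.single 2 1) (Pi.single 4 1) = 0)
    (hω25 : ω (Pi.single 2 1) (Pi.single 5 1) = 0)
    (hω34 : ω (Pi.single 3 1) (Pi.single 4 1) = 0)
    (hω35 : ω (Pi.single 3 1) (Pi.single 5 1) = 0)
    (hω45 : ω (Pi.single 4 1) (Pi.single 5 1) = 0)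
    -- the metric g(x,y) = -ω(x, Jy)
    (gm : LinearMap.BilinForm ℝ (Fin 6 → ℝ))
    (hgm : ∀ x y, gm x y = - ω x (J y)) :
    -- g is symmetric and nondegenerate, and there is no derivation D with
    -- D∘J = J∘D and D + D* = 2·id
    (∀ x y, gm x y = gm y x) ∧ gm.Nondegenerate ∧
    ¬ ∃ (D Dstar : (Fin 6 → ℝ) →ₗ[ℝ] (Fin 6 → ℝ)),
        IsDerivB br D ∧
        (∀ x y, gm (D x) y = gm x (Dstar y)) ∧
        D ∘ₗ J = J ∘ₗ D ∧
        D + Dstar = (2:ℝ) • (LinearMap.id : (Fin 6 → ℝ) →ₗ[ℝ] (Fin 6 → ℝ)) := by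
    -- full ω table
  have w00 : ω (Pi.single 0 1 : Fin 6 → ℝ) (Pi.single 0 1 : Fin 6 → ℝ) = 0 := by have h := hωalt (Pi.single 0 1 : Fin 6 → ℝ) (Pi.single 0 1 : Fin 6 → ℝ); linarith
  have w01 : ω (Pi.single 0 1 : Fin 6 → ℝ) (Pi.single 1 1 : Fin 6 → ℝ) = 0 := by rw [hω01]
  have w02 : ω (Pi.single 0 1 : Fin 6 → ℝ) (Pi.single 2 1 : Fin 6 → ℝ) = 0 := by rw [hω02]
  have w03 : ω (Pi.single 0 1 : Fin 6 → ℝ) (Pi.single 3 1 : Fin 6 → ℝ) = 0 := by rw [hω03]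
  have w04 : ω (Pi.single 0 1 : Fin 6 → ℝ) (Pi.single 4 1 : Fin 6 → ℝ) = 0 := by rw [hω04]
  have w05 : ω (Pi.single 0 1 : Fin 6 → ℝ) (Pi.single 5 1 : Fin 6 → ℝ) = 1 := by rw [hω05]
  have w10 : ω (Pi.single 1 1 : Fin 6 → ℝ) (Pi.single 0 1 : Fin 6 → ℝ) = 0 := by rw [hωalt, hω01] <;> norm_num
  have w11 : ω (Pi.single 1 1 : Fin 6 → ℝ) (Pi.single 1 1 : Fin 6 → ℝ) = 0 := by have h := hωalt (Pi.single 1 1 : Fin 6 → ℝ) (Pi.single 1 1 : Fin 6 → ℝ); linarith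
  have w12 : ω (Pi.single 1 1 : Fin 6 → ℝ) (Pi.single 2 1 : Fin 6 → ℝ) = 0 := by rw [hω12]
  have w13 : ω (Pi.single 1 1 : Fin 6 → ℝ) (Pi.single 3 1 : Fin 6 → ℝ) = 1 := by rw [hω13]
  have w14 : ω (Pi.single 1 1 : Fin 6 → ℝ) (Pi.single 4 1 : Fin 6 → ℝ) = -(1/2) := by rw [hω14]
  have w15 : ω (Pi.single 1 1 : Fin 6 → ℝ) (Pi.single 5 1 : Fin 6 → ℝ) = 0 := by rw [hω15]
  have w20 : ω (Pi.single 2 1 : Fin 6 → ℝ) (Pi.single 0 1 : Fin 6 → ℝ) = 0 := by rw [hωalt, hω02] <;> norm_num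
  have w21 : ω (Pi.single 2 1 : Fin 6 → ℝ) (Pi.single 1 1 : Fin 6 → ℝ) = 0 := by rw [hωalt, hω12] <;> norm_num
  have w22 : ω (Pi.single 2 1 : Fin 6 → ℝ) (Pi.single 2 1 : Fin 6 → ℝ) = 0 := by have h := hωalt (Pi.single 2 1 : Fin 6 → ℝ) (Pi.single 2 1 : Fin 6 → ℝ); linarith
  have w23 : ω (Pi.single 2 1 : Fin 6 → ℝ) (Pi.single 3 1 : Fin 6 → ℝ) = 1/2 := by rw [hω23]
  have w24 : ω (Pi.single 2 1 : Fin 6 → ℝ) (Pi.single 4 1 : Fin 6 → ℝ) = 0 := by rw [hω24]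
  have w25 : ω (Pi.single 2 1 : Fin 6 → ℝ) (Pi.single 5 1 : Fin 6 → ℝ) = 0 := by rw [hω25]
  have w30 : ω (Pi.single 3 1 : Fin 6 → ℝ) (Pi.single 0 1 : Fin 6 → ℝ) = 0 := by rw [hωalt, hω03] <;> norm_num
  have w31 : ω (Pi.single 3 1 : Fin 6 → ℝ) (Pi.single 1 1 : Fin 6 → ℝ) = -(1) := by rw [hωalt, hω13] <;> norm_num
  have w32 : ω (Pi.single 3 1 : Fin 6 → ℝ) (Pi.single 2 1 : Fin 6 → ℝ) = -(1/2) := by rw [hωalt, hω23] <;> norm_num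
  have w33 : ω (Pi.single 3 1 : Fin 6 → ℝ) (Pi.single 3 1 : Fin 6 → ℝ) = 0 := by have h := hωalt (Pi.single 3 1 : Fin 6 → ℝ) (Pi.single 3 1 : Fin 6 → ℝ); linarith
  have w34 : ω (Pi.single 3 1 : Fin 6 → ℝ) (Pi.single 4 1 : Fin 6 → ℝ) = 0 := by rw [hω34]
  have w35 : ω (Pi.single 3 1 : Fin 6 → ℝ) (Pi.single 5 1 : Fin 6 → ℝ) = 0 := by rw [hω35]
  have w40 : ω (Pi.single 4 1 : Fin 6 → ℝ) (Pi.single 0 1 : Fin 6 → ℝ) = 0 := by rw [hωalt, hω04] <;> norm_num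
  have w41 : ω (Pi.single 4 1 : Fin 6 → ℝ) (Pi.single 1 1 : Fin 6 → ℝ) = -(-(1/2)) := by rw [hωalt, hω14] <;> norm_num
  have w42 : ω (Pi.single 4 1 : Fin 6 → ℝ) (Pi.single 2 1 : Fin 6 → ℝ) = 0 := by rw [hωalt, hω24] <;> norm_num
  have w43 : ω (Pi.single 4 1 : Fin 6 → ℝ) (Pi.single 3 1 : Fin 6 → ℝ) = 0 := by rw [hωalt, hω34] <;> norm_num
  have w44 : ω (Pi.single 4 1 : Fin 6 → ℝ) (Pi.single 4 1 : Fin 6 → ℝ) = 0 := by have h := hωalt (Pi.single 4 1 : Fin 6 → ℝ) (Pi.single 4 1 : Fin 6 → ℝ); linarith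
  have w45 : ω (Pi.single 4 1 : Fin 6 → ℝ) (Pi.single 5 1 : Fin 6 → ℝ) = 0 := by rw [hω45]
  have w50 : ω (Pi.single 5 1 : Fin 6 → ℝ) (Pi.single 0 1 : Fin 6 → ℝ) = -(1) := by rw [hωalt, hω05] <;> norm_num
  have w51 : ω (Pi.single 5 1 : Fin 6 → ℝ) (Pi.single 1 1 : Fin 6 → ℝ) = 0 := by rw [hωalt, hω15] <;> norm_num
  have w52 : ω (Pi.single 5 1 : Fin 6 → ℝ) (Pi.single 2 1 : Fin 6 → ℝ) = 0 := by rw [hωalt, hω25] <;> norm_num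
  have w53 : ω (Pi.single 5 1 : Fin 6 → ℝ) (Pi.single 3 1 : Fin 6 → ℝ) = 0 := by rw [hωalt, hω35] <;> norm_num
  have w54 : ω (Pi.single 5 1 : Fin 6 → ℝ) (Pi.single 4 1 : Fin 6 → ℝ) = 0 := by rw [hωalt, hω45] <;> norm_num
  have w55 : ω (Pi.single 5 1 : Fin 6 → ℝ) (Pi.single 5 1 : Fin 6 → ℝ) = 0 := by have h := hωalt (Pi.single 5 1 : Fin 6 → ℝ) (Pi.single 5 1 : Fin 6 → ℝ); linarith
  -- gm table
  have g00 : gm (Pi.single 0 1 : Fin 6 → ℝ) (Pi.single 0 1 : Fin 6 → ℝ) = 0 := by rw [hgm, hJ0]; simp [map_add, map_sub, map_smul, w01] <;> (try field_simp) <;> (try ring)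
  have g01 : gm (Pi.single 0 1 : Fin 6 → ℝ) (Pi.single 1 1 : Fin 6 → ℝ) = 0 := by rw [hgm, hJ1]; simp [map_add, map_sub, map_smul, w00] <;> (try field_simp) <;> (try ring)
  have g02 : gm (Pi.single 0 1 : Fin 6 → ℝ) (Pi.single 2 1 : Fin 6 → ℝ) = 0 := by rw [hgm, hJ2]; simp [map_add, map_sub, map_smul, w03, w04] <;> (try field_simp) <;> (try ring)
  have g03 : gm (Pi.single 0 1 : Fin 6 → ℝ) (Pi.single 3 1 : Fin 6 → ℝ) = (1) / a := by rw [hgm, hJ3]; simp [map_add, map_sub, map_smul, w02, w05] <;> (try field_simp) <;> (try ring)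
  have g04 : gm (Pi.single 0 1 : Fin 6 → ℝ) (Pi.single 4 1 : Fin 6 → ℝ) = (-1/2) / a := by rw [hgm, hJ4]; simp [map_add, map_sub, map_smul, w05] <;> (try field_simp) <;> (try ring)
  have g05 : gm (Pi.single 0 1 : Fin 6 → ℝ) (Pi.single 5 1 : Fin 6 → ℝ) = 0 := by rw [hgm, hJ5]; simp [map_add, map_sub, map_smul, w04] <;> (try field_simp) <;> (try ring)
  have g10 : gm (Pi.single 1 1 : Fin 6 → ℝ) (Pi.single 0 1 : Fin 6 → ℝ) = 0 := by rw [hgm, hJ0]; simp [map_add, map_sub, map_smul, w11] <;> (try field_simp) <;> (try ring)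
  have g11 : gm (Pi.single 1 1 : Fin 6 → ℝ) (Pi.single 1 1 : Fin 6 → ℝ) = 0 := by rw [hgm, hJ1]; simp [map_add, map_sub, map_smul, w10] <;> (try field_simp) <;> (try ring)
  have g12 : gm (Pi.single 1 1 : Fin 6 → ℝ) (Pi.single 2 1 : Fin 6 → ℝ) = 0 := by rw [hgm, hJ2]; simp [map_add, map_sub, map_smul, w13, w14] <;> (try field_simp) <;> (try ring)
  have g13 : gm (Pi.single 1 1 : Fin 6 → ℝ) (Pi.single 3 1 : Fin 6 → ℝ) = 0 := by rw [hgm, hJ3]; simp [map_add, map_sub, map_smul, w12, w15] <;> (try field_simp) <;> (try ring)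
  have g14 : gm (Pi.single 1 1 : Fin 6 → ℝ) (Pi.single 4 1 : Fin 6 → ℝ) = 0 := by rw [hgm, hJ4]; simp [map_add, map_sub, map_smul, w15] <;> (try field_simp) <;> (try ring)
  have g15 : gm (Pi.single 1 1 : Fin 6 → ℝ) (Pi.single 5 1 : Fin 6 → ℝ) = (-1) * a := by rw [hgm, hJ5]; simp [map_add, map_sub, map_smul, w14] <;> (try field_simp) <;> (try ring)
  have g20 : gm (Pi.single 2 1 : Fin 6 → ℝ) (Pi.single 0 1 : Fin 6 → ℝ) = 0 := by rw [hgm, hJ0]; simp [map_add, map_sub, map_smul, w21] <;> (try field_simp) <;> (try ring)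
  have g21 : gm (Pi.single 2 1 : Fin 6 → ℝ) (Pi.single 1 1 : Fin 6 → ℝ) = 0 := by rw [hgm, hJ1]; simp [map_add, map_sub, map_smul, w20] <;> (try field_simp) <;> (try ring)
  have g22 : gm (Pi.single 2 1 : Fin 6 → ℝ) (Pi.single 2 1 : Fin 6 → ℝ) = (-3/4) / a := by rw [hgm, hJ2]; simp [map_add, map_sub, map_smul, w23, w24] <;> (try field_simp) <;> (try ring)
  have g23 : gm (Pi.single 2 1 : Fin 6 → ℝ) (Pi.single 3 1 : Fin 6 → ℝ) = 0 := by rw [hgm, hJ3]; simp [map_add, map_sub, map_smul, w22, w25] <;> (try field_simp) <;> (try ring)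
  have g24 : gm (Pi.single 2 1 : Fin 6 → ℝ) (Pi.single 4 1 : Fin 6 → ℝ) = 0 := by rw [hgm, hJ4]; simp [map_add, map_sub, map_smul, w25] <;> (try field_simp) <;> (try ring)
  have g25 : gm (Pi.single 2 1 : Fin 6 → ℝ) (Pi.single 5 1 : Fin 6 → ℝ) = 0 := by rw [hgm, hJ5]; simp [map_add, map_sub, map_smul, w24] <;> (try field_simp) <;> (try ring)
  have g30 : gm (Pi.single 3 1 : Fin 6 → ℝ) (Pi.single 0 1 : Fin 6 → ℝ) = (1) / a := by rw [hgm, hJ0]; simp [map_add, map_sub, map_smul, w31] <;> (try field_simp) <;> (try ring)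
  have g31 : gm (Pi.single 3 1 : Fin 6 → ℝ) (Pi.single 1 1 : Fin 6 → ℝ) = 0 := by rw [hgm, hJ1]; simp [map_add, map_sub, map_smul, w30] <;> (try field_simp) <;> (try ring)
  have g32 : gm (Pi.single 3 1 : Fin 6 → ℝ) (Pi.single 2 1 : Fin 6 → ℝ) = 0 := by rw [hgm, hJ2]; simp [map_add, map_sub, map_smul, w33, w34] <;> (try field_simp) <;> (try ring)
  have g33 : gm (Pi.single 3 1 : Fin 6 → ℝ) (Pi.single 3 1 : Fin 6 → ℝ) = (-1/3) * a := by rw [hgm, hJ3]; simp [map_add, map_sub, map_smul, w32, w35] <;> (try field_simp) <;> (try ring)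
  have g34 : gm (Pi.single 3 1 : Fin 6 → ℝ) (Pi.single 4 1 : Fin 6 → ℝ) = 0 := by rw [hgm, hJ4]; simp [map_add, map_sub, map_smul, w35] <;> (try field_simp) <;> (try ring)
  have g35 : gm (Pi.single 3 1 : Fin 6 → ℝ) (Pi.single 5 1 : Fin 6 → ℝ) = 0 := by rw [hgm, hJ5]; simp [map_add, map_sub, map_smul, w34] <;> (try field_simp) <;> (try ring)
  have g40 : gm (Pi.single 4 1 : Fin 6 → ℝ) (Pi.single 0 1 : Fin 6 → ℝ) = (-1/2) / a := by rw [hgm, hJ0]; simp [map_add, map_sub, map_smul, w41] <;> (try field_simp) <;> (try ring)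
  have g41 : gm (Pi.single 4 1 : Fin 6 → ℝ) (Pi.single 1 1 : Fin 6 → ℝ) = 0 := by rw [hgm, hJ1]; simp [map_add, map_sub, map_smul, w40] <;> (try field_simp) <;> (try ring)
  have g42 : gm (Pi.single 4 1 : Fin 6 → ℝ) (Pi.single 2 1 : Fin 6 → ℝ) = 0 := by rw [hgm, hJ2]; simp [map_add, map_sub, map_smul, w43, w44] <;> (try field_simp) <;> (try ring)
  have g43 : gm (Pi.single 4 1 : Fin 6 → ℝ) (Pi.single 3 1 : Fin 6 → ℝ) = 0 := by rw [hgm, hJ3]; simp [map_add, map_sub, map_smul, w42, w45] <;> (try field_simp) <;> (try ring)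
  have g44 : gm (Pi.single 4 1 : Fin 6 → ℝ) (Pi.single 4 1 : Fin 6 → ℝ) = 0 := by rw [hgm, hJ4]; simp [map_add, map_sub, map_smul, w45] <;> (try field_simp) <;> (try ring)
  have g45 : gm (Pi.single 4 1 : Fin 6 → ℝ) (Pi.single 5 1 : Fin 6 → ℝ) = 0 := by rw [hgm, hJ5]; simp [map_add, map_sub, map_smul, w44] <;> (try field_simp) <;> (try ring)
  have g50 : gm (Pi.single 5 1 : Fin 6 → ℝ) (Pi.single 0 1 : Fin 6 → ℝ) = 0 := by rw [hgm, hJ0]; simp [map_add, map_sub, map_smul, w51] <;> (try field_simp) <;> (try ring)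
  have g51 : gm (Pi.single 5 1 : Fin 6 → ℝ) (Pi.single 1 1 : Fin 6 → ℝ) = (-1) * a := by rw [hgm, hJ1]; simp [map_add, map_sub, map_smul, w50] <;> (try field_simp) <;> (try ring)
  have g52 : gm (Pi.single 5 1 : Fin 6 → ℝ) (Pi.single 2 1 : Fin 6 → ℝ) = 0 := by rw [hgm, hJ2]; simp [map_add, map_sub, map_smul, w53, w54] <;> (try field_simp) <;> (try ring)
  have g53 : gm (Pi.single 5 1 : Fin 6 → ℝ) (Pi.single 3 1 : Fin 6 → ℝ) = 0 := by rw [hgm, hJ3]; simp [map_add, map_sub, map_smul, w52, w55] <;> (try field_simp) <;> (try ring)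
  have g54 : gm (Pi.single 5 1 : Fin 6 → ℝ) (Pi.single 4 1 : Fin 6 → ℝ) = 0 := by rw [hgm, hJ4]; simp [map_add, map_sub, map_smul, w55] <;> (try field_simp) <;> (try ring)
  have g55 : gm (Pi.single 5 1 : Fin 6 → ℝ) (Pi.single 5 1 : Fin 6 → ℝ) = 0 := by rw [hgm, hJ5]; simp [map_add, map_sub, map_smul, w54] <;> (try field_simp) <;> (try ring)
  -- bracket table
  have brxx : ∀ x : Fin 6 → ℝ, br x x = 0 := by
    intro x
    have h := hbr.1 x x
    have h2 : (2:ℝ) • br x x = 0 := by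
      rw [two_smul]; nth_rewrite 1 [h]; abel
    exact (smul_eq_zero.mp h2).resolve_left (by norm_num)
  have b01 := h01
  have b02 := h02
  have b03 := h03
  have b04 := h04
  have b05 := h05
  have b10 : br (Pi.single 1 1 : Fin 6 → ℝ) (Pi.single 0 1 : Fin 6 → ℝ) = -((Pi.single 3 1 : Fin 6 → ℝ)) := by rw [hbr.1, h01]
  have b12 := h12
  have b13 := h13
  have b14 := h14
  have b15 := h15
  have b20 : br (Pi.single 2 1 : Fin 6 → ℝ) (Pi.single 0 1 : Fin 6 → ℝ) = -((Pi.single 4 1 : Fin 6 → ℝ)) := by rw [hbr.1, h02]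
  have b21 : br (Pi.single 2 1 : Fin 6 → ℝ) (Pi.single 1 1 : Fin 6 → ℝ) = -(- (Pi.single 5 1 : Fin 6 → ℝ)) := by rw [hbr.1, h12]
  have b23 := h23
  have b24 := h24
  have b25 := h25
  have b30 : br (Pi.single 3 1 : Fin 6 → ℝ) (Pi.single 0 1 : Fin 6 → ℝ) = -((Pi.single 5 1 : Fin 6 → ℝ)) := by rw [hbr.1, h03]
  have b31 : br (Pi.single 3 1 : Fin 6 → ℝ) (Pi.single 1 1 : Fin 6 → ℝ) = 0 := by rw [hbr.1, h13, neg_zero]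
  have b32 : br (Pi.single 3 1 : Fin 6 → ℝ) (Pi.single 2 1 : Fin 6 → ℝ) = 0 := by rw [hbr.1, h23, neg_zero]
  have b34 := h34
  have b35 := h35
  have b40 : br (Pi.single 4 1 : Fin 6 → ℝ) (Pi.single 0 1 : Fin 6 → ℝ) = 0 := by rw [hbr.1, h04, neg_zero]
  have b41 : br (Pi.single 4 1 : Fin 6 → ℝ) (Pi.single 1 1 : Fin 6 → ℝ) = 0 := by rw [hbr.1, h14, neg_zero]
  have b42 : br (Pi.single 4 1 : Fin 6 → ℝ) (Pi.single 2 1 : Fin 6 → ℝ) = 0 := by rw [hbr.1, h24, neg_zero]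
  have b43 : br (Pi.single 4 1 : Fin 6 → ℝ) (Pi.single 3 1 : Fin 6 → ℝ) = 0 := by rw [hbr.1, h34, neg_zero]
  have b45 := h45
  have b50 : br (Pi.single 5 1 : Fin 6 → ℝ) (Pi.single 0 1 : Fin 6 → ℝ) = 0 := by rw [hbr.1, h05, neg_zero]
  have b51 : br (Pi.single 5 1 : Fin 6 → ℝ) (Pi.single 1 1 : Fin 6 → ℝ) = 0 := by rw [hbr.1, h15, neg_zero]
  have b52 : br (Pi.single 5 1 : Fin 6 → ℝ) (Pi.single 2 1 : Fin 6 → ℝ) = 0 := by rw [hbr.1, h25, neg_zero]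
  have b53 : br (Pi.single 5 1 : Fin 6 → ℝ) (Pi.single 3 1 : Fin 6 → ℝ) = 0 := by rw [hbr.1, h35, neg_zero]
  have b54 : br (Pi.single 5 1 : Fin 6 → ℝ) (Pi.single 4 1 : Fin 6 → ℝ) = 0 := by rw [hbr.1, h45, neg_zero]

  have hsymm : ∀ x y, gm x y = gm y x := by
    intro x y
    rw [expand6 x, expand6 y]
    simp only [map_add, map_smul, LinearMap.add_apply, LinearMap.smul_apply, g00, g01, g02, g03, g04, g05, g10, g11, g12, g13, g14, g15, g20, g21, g22, g23, g24, g25, g30, g31, g32, g33, g34, g35, g40, g41, g42, g43, g44, g45, g50, g51, g52, g53, g54, g55, smul_eq_mul]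
    ring
  have hnd : gm.Nondegenerate := by
    refine (LinearMap.IsRefl.nondegenerate_iff_separatingLeft (fun x y h => by rw [hsymm]; exact h)).2 ?_
    intro x hx
    have q0 := hx (Pi.single 0 1); have q1 := hx (Pi.single 1 1); have q2 := hx (Pi.single 2 1)
    have q3 := hx (Pi.single 3 1); have q4 := hx (Pi.single 4 1); have q5 := hx (Pi.single 5 1)
    rw [expand6 x] at q0 q1 q2 q3 q4 q5
    simp only [map_add, map_smul, LinearMap.add_apply, LinearMap.smul_apply, g00, g01, g02, g03, g04, g05, g10, g11, g12, g13, g14, g15, g20, g21, g22, g23, g24, g25, g30, g31, g32, g33, g34, g35, g40, g41, g42, g43, g44, g45, g50, g51, g52, g53, g54, g55, smul_eq_mul] at q0 q1 q2 q3 q4 q5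
    field_simp [ha] at q0 q1 q2 q3 q4 q5
    have hx0 : x 0 = 0 := by linarith
    have hx2 : x 2 = 0 := by linarith
    have hx5 : x 5 = 0 := by
      rcases mul_eq_zero.mp (by linear_combination -q1 : x 5 * a = 0) with h | h
      · exact h
      · exact absurd h ha
    have hx1 : x 1 = 0 := by
      rcases mul_eq_zero.mp (by linear_combination -q5 : x 1 * a = 0) with h | h
      · exact h
      · exact absurd h ha
    have hx3 : x 3 = 0 := by
      have h3 : x 3 * (a * a) = 0 := by linear_combination -q3 - 3 * q4
      rcases mul_eq_zero.mp h3 with h | h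
      · exact h
      · exact absurd h (mul_ne_zero ha ha)
    have hx4 : x 4 = 0 := by
      have h4 : x 4 * a = 0 := by linear_combination -a * q0 + 2 * a * hx3
      rcases mul_eq_zero.mp h4 with h | h
      · exact h
      · exact absurd h ha
    funext i
    fin_cases i
    · exact hx0
    · exact hx1
    · exact hx2
    · exact hx3
    · exact hx4
    · exact hx5
  -- diagonal brackets
  have b00 : br (Pi.single 0 1 : Fin 6 → ℝ) (Pi.single 0 1 : Fin 6 → ℝ) = 0 := brxx _
  have b11 : br (Pi.single 1 1 : Fin 6 → ℝ) (Pi.single 1 1 : Fin 6 → ℝ) = 0 := brxx _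
  have b22 : br (Pi.single 2 1 : Fin 6 → ℝ) (Pi.single 2 1 : Fin 6 → ℝ) = 0 := brxx _
  have b33 : br (Pi.single 3 1 : Fin 6 → ℝ) (Pi.single 3 1 : Fin 6 → ℝ) = 0 := brxx _
  have b44 : br (Pi.single 4 1 : Fin 6 → ℝ) (Pi.single 4 1 : Fin 6 → ℝ) = 0 := brxx _
  have b55 : br (Pi.single 5 1 : Fin 6 → ℝ) (Pi.single 5 1 : Fin 6 → ℝ) = 0 := brxx _
  refine ⟨hsymm, hnd, ?_⟩
  rintro ⟨D, Dstar, hD, hadj, hDJ, hsum⟩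
  have key : ∀ x y, gm x (D y) + gm (D x) y = 2 * gm x y := by
    intro x y
    have h1 := hadj x y
    have h2 := LinearMap.congr_fun hsum y
    simp only [LinearMap.add_apply, LinearMap.smul_apply, LinearMap.id_apply] at h2
    rw [h1, ← map_add]
    rw [h2]
    rw [map_smul]
    simp [smul_eq_mul]
  -- derivation equations
  have hd1 := hD (Pi.single 0 1 : Fin 6 → ℝ) (Pi.single 1 1 : Fin 6 → ℝ)
  rw [h01, expand6 (D (Pi.single 0 1 : Fin 6 → ℝ)), expand6 (D (Pi.single 1 1 : Fin 6 → ℝ))] at hd1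
  simp only [map_add, map_smul, LinearMap.add_apply, LinearMap.smul_apply, b00, b01, b02, b03, b04, b05, b10, b11, b12, b13, b14, b15, b20, b21, b22, b23, b24, b25, b30, b31, b32, b33, b34, b35, b40, b41, b42, b43, b44, b45, b50, b51, b52, b53, b54, b55, smul_zero, add_zero, zero_add, smul_neg] at hd1
  have e1 := congrFun hd1 (3 : Fin 6)
  have e2 := congrFun hd1 (4 : Fin 6)
  simp [Pi.single_apply] at e1 e2
  have hd2 := hD (Pi.single 0 1 : Fin 6 → ℝ) (Pi.single 2 1 : Fin 6 → ℝ)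
  rw [h02, expand6 (D (Pi.single 0 1 : Fin 6 → ℝ)), expand6 (D (Pi.single 2 1 : Fin 6 → ℝ))] at hd2
  simp only [map_add, map_smul, LinearMap.add_apply, LinearMap.smul_apply, b00, b01, b02, b03, b04, b05, b10, b11, b12, b13, b14, b15, b20, b21, b22, b23, b24, b25, b30, b31, b32, b33, b34, b35, b40, b41, b42, b43, b44, b45, b50, b51, b52, b53, b54, b55, smul_zero, add_zero, zero_add, smul_neg] at hd2
  have e3 := congrFun hd2 (4 : Fin 6)
  simp [Pi.single_apply] at e3
  -- J commuting equations
  have hc0 := LinearMap.congr_fun hDJ (Pi.single 0 1 : Fin 6 → ℝ)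
  simp only [LinearMap.comp_apply] at hc0
  rw [hJ0, map_smul, expand6 (D (Pi.single 0 1 : Fin 6 → ℝ))] at hc0
  simp only [map_add, map_smul, hJ0, hJ1, hJ2, hJ3, hJ4, hJ5] at hc0
  have e5 := congrFun hc0 (1 : Fin 6)
  have e6 := congrFun hc0 (2 : Fin 6)
  simp [Pi.single_apply] at e5 e6
  have hc2 := LinearMap.congr_fun hDJ (Pi.single 2 1 : Fin 6 → ℝ)
  simp only [LinearMap.comp_apply] at hc2
  rw [hJ2, map_add, map_smul, map_smul, expand6 (D (Pi.single 2 1 : Fin 6 → ℝ))] at hc2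
  simp only [map_add, map_smul, hJ0, hJ1, hJ2, hJ3, hJ4, hJ5] at hc2
  have e7 := congrFun hc2 (4 : Fin 6)
  simp [Pi.single_apply] at e7
  -- metric equations
  have m12 := key (Pi.single 1 1 : Fin 6 → ℝ) (Pi.single 2 1 : Fin 6 → ℝ)
  rw [expand6 (D (Pi.single 1 1 : Fin 6 → ℝ)), expand6 (D (Pi.single 2 1 : Fin 6 → ℝ))] at m12
  simp only [map_add, map_smul, LinearMap.add_apply, LinearMap.smul_apply, g00, g01, g02, g03, g04, g05, g10, g11, g12, g13, g14, g15, g20, g21, g22, g23, g24, g25, g30, g31, g32, g33, g34, g35, g40, g41, g42, g43, g44, g45, g50, g51, g52, g53, g54, g55, smul_eq_mul] at m12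
  have m03 := key (Pi.single 0 1 : Fin 6 → ℝ) (Pi.single 3 1 : Fin 6 → ℝ)
  rw [expand6 (D (Pi.single 0 1 : Fin 6 → ℝ)), expand6 (D (Pi.single 3 1 : Fin 6 → ℝ))] at m03
  simp only [map_add, map_smul, LinearMap.add_apply, LinearMap.smul_apply, g00, g01, g02, g03, g04, g05, g10, g11, g12, g13, g14, g15, g20, g21, g22, g23, g24, g25, g30, g31, g32, g33, g34, g35, g40, g41, g42, g43, g44, g45, g50, g51, g52, g53, g54, g55, smul_eq_mul] at m03
  -- assemble the contradiction
  field_simp at e5 e6 e7 m12 m03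
  have hA : (12:ℝ) * a ^ 3 = 0 := by
    linear_combination a ^ 3 * (3 * (e7 - 3 * e2 - 6 * e3 + m12) - (m03 - 6 * e1 + 3 * e2 - 6 * e5 + e6))
  exact absurd hA (mul_ne_zero (by norm_num) (pow_ne_zero 3 ha))
end
end
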